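/- As p → ∞, the asymptotic variance of the disjoint-blocks Root-estimator in the serially independent case converges to that of the CFG-estimator: lim_{p→∞} [ (2p/B(1/p,1/p))·( p² + 2^{−2/p}·p ) − p² − p ] = π²/6 − 2·log 2, where B(x,y) = Γ(x)Γ(y)/Γ(x+y) is the Beta function. -/

import Mathlib

open Filter

/-- The Beta function `B(x,y) = Γ(x)Γ(y)/Γ(x+y)`. -/
noncomputable def betaFun (x y : ℝ) : ℝ :=
  Real.Gamma x * Real.Gamma y / Real.Gamma (x + y)

namespace RootCFG

open Finset Real

/-- The key Gamma-quotient `Γ(1+2x)/Γ(1+x)²`, which equals `2p/B(1/p,1/p)` for `x = 1/p`. -/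
noncomputable def Fq (x : ℝ) : ℝ := Real.Gamma (1 + 2 * x) / Real.Gamma (1 + x) ^ 2

/-- Term of the Euler product for `Fq`. -/
noncomputable def rterm (x : ℝ) (m : ℕ) : ℝ :=
  (1 + x / ((m : ℝ) + 1)) ^ 2 / (1 + 2 * x / ((m : ℝ) + 1))

/-- Partial products of the Euler product. -/
noncomputable def Pprod (x : ℝ) (n : ℕ) : ℝ := ∏ m ∈ Finset.range n, rterm x m

lemma exp_le_inv_one_sub {u : ℝ} (hu : u < 1) : Real.exp u ≤ 1 / (1 - u) := by
  have h := Real.add_one_le_exp (-u)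
  rw [Real.exp_neg] at h
  have hepos := Real.exp_pos u
  rw [le_div_iff₀ (by linarith : (0:ℝ) < 1 - u)]
  calc Real.exp u * (1 - u) ≤ Real.exp u * (Real.exp u)⁻¹ := by
        apply mul_le_mul_of_nonneg_left (by linarith) hepos.le
    _ = 1 := mul_inv_cancel₀ hepos.ne'

lemma rterm_pos {x : ℝ} (hx : 0 < x) (m : ℕ) : 0 < rterm x m := by
  rw [rterm]
  have h1 : (0:ℝ) < (m : ℝ) + 1 := by positivity
  positivity

lemma rterm_le {x : ℝ} (hx : 0 < x) (m : ℕ) :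
    rterm x m ≤ Real.exp ((x / ((m : ℝ) + 1)) ^ 2) := by
  set a := x / ((m : ℝ) + 1) with ha
  have ha0 : 0 < a := by positivity
  have h2a : (0:ℝ) < 1 + 2 * a := by linarith
  have hr : rterm x m = (1 + a) ^ 2 / (1 + 2 * a) := by
    rw [rterm, ← ha, ← mul_div_assoc]
  clear_value a
  rw [hr]
  calc (1 + a) ^ 2 / (1 + 2 * a) ≤ 1 + a ^ 2 := by
        rw [div_le_iff₀ h2a]; nlinarith [pow_pos ha0 3]
    _ ≤ Real.exp (a ^ 2) := by linarith [Real.add_one_le_exp (a ^ 2)]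

lemma le_rterm {x : ℝ} (hx : 0 < x) (m : ℕ) :
    Real.exp ((x / ((m : ℝ) + 1)) ^ 2 * (1 - 2 * (x / ((m : ℝ) + 1)))) ≤ rterm x m := by
  set a := x / ((m : ℝ) + 1) with ha
  have ha0 : 0 < a := by positivity
  have h2a : (0:ℝ) < 1 + 2 * a := by linarith
  have hr : rterm x m = (1 + a) ^ 2 / (1 + 2 * a) := by
    rw [rterm, ← ha, ← mul_div_assoc]
  clear_value a
  have hu : a ^ 2 * (1 - 2 * a) < 1 := by
    nlinarith [mul_nonneg ha0.le (sq_nonneg (a - 1)), sq_nonneg (3 * a - 1)]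
  have hden : 0 < 1 - a ^ 2 * (1 - 2 * a) := by linarith
  refine (exp_le_inv_one_sub hu).trans ?_
  rw [hr, div_le_div_iff₀ hden h2a]
  nlinarith [pow_nonneg ha0.le 4, pow_nonneg ha0.le 5, pow_pos ha0 3]

/-- Partial sums of the Basel series, shifted. -/
noncomputable def Tsum (n : ℕ) : ℝ := ∑ m ∈ Finset.range n, 1 / ((m : ℝ) + 1) ^ 2

lemma Tsum_eq (n : ℕ) : Tsum n = ∑ k ∈ Finset.range (n + 1), 1 / (k : ℝ) ^ 2 := by
  rw [Finset.sum_range_succ']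
  simp [Tsum]

lemma Tsum_le (n : ℕ) : Tsum n ≤ Real.pi ^ 2 / 6 := by
  rw [Tsum_eq]
  exact sum_le_hasSum _ (fun i _ => by positivity) hasSum_zeta_two

lemma Tsum_tendsto : Tendsto Tsum atTop (nhds (Real.pi ^ 2 / 6)) := by
  have h := hasSum_zeta_two.tendsto_sum_nat
  have h2 := (tendsto_add_atTop_iff_nat 1).mpr h
  exact h2.congr fun n => (Tsum_eq n).symm

lemma Pprod_eq {x : ℝ} (hx : 0 < x) {n : ℕ} (hn : 1 ≤ n) :
    Pprod x (n + 1) =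
      Real.GammaSeq (1 + 2 * x) n / Real.GammaSeq (1 + x) n ^ 2 * ((n : ℝ) / ((n : ℝ) + 1)) := by
  have hn0 : (0:ℝ) < n := by exact_mod_cast hn
  have hfact : ((Nat.factorial (n + 1) : ℕ) : ℝ) = ∏ j ∈ Finset.range (n + 1), ((j : ℝ) + 1) := by
    rw [← Finset.prod_range_add_one_eq_factorial]
    push_cast
    rfl
  have hA : ∏ j ∈ Finset.range (n + 1), (1 + x + (j : ℝ)) =
      ((Nat.factorial (n + 1) : ℕ) : ℝ) * ∏ j ∈ Finset.range (n + 1), (1 + x / ((j : ℝ) + 1)) := by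
    rw [hfact, ← Finset.prod_mul_distrib]
    refine Finset.prod_congr rfl fun j _ => ?_
    have hj : ((j : ℝ) + 1) ≠ 0 := by positivity
    field_simp
    ring
  have hB : ∏ j ∈ Finset.range (n + 1), (1 + 2 * x + (j : ℝ)) =
      ((Nat.factorial (n + 1) : ℕ) : ℝ) * ∏ j ∈ Finset.range (n + 1), (1 + 2 * x / ((j : ℝ) + 1)) := by
    rw [hfact, ← Finset.prod_mul_distrib]
    refine Finset.prod_congr rfl fun j _ => ?_
    have hj : ((j : ℝ) + 1) ≠ 0 := by positivity
    field_simp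
    ring
  have hP : Pprod x (n + 1) =
      (∏ j ∈ Finset.range (n + 1), (1 + x / ((j : ℝ) + 1))) ^ 2 /
        ∏ j ∈ Finset.range (n + 1), (1 + 2 * x / ((j : ℝ) + 1)) := by
    rw [Pprod, ← Finset.prod_pow, ← Finset.prod_div_distrib]
    rfl
  have hU : (0:ℝ) < ∏ j ∈ Finset.range (n + 1), (1 + x / ((j : ℝ) + 1)) := by
    apply Finset.prod_pos
    intro j _
    have : (0:ℝ) < (j : ℝ) + 1 := by positivity
    positivity
  have hV : (0:ℝ) < ∏ j ∈ Finset.range (n + 1), (1 + 2 * x / ((j : ℝ) + 1)) := by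
    apply Finset.prod_pos
    intro j _
    have : (0:ℝ) < (j : ℝ) + 1 := by positivity
    positivity
  have hs : (0:ℝ) < (n : ℝ) ^ x := Real.rpow_pos_of_pos hn0 x
  have h1 : (n : ℝ) ^ (1 + x) = (n : ℝ) * (n : ℝ) ^ x := by
    rw [Real.rpow_add hn0, Real.rpow_one]
  have h2 : (n : ℝ) ^ (1 + 2 * x) = (n : ℝ) * ((n : ℝ) ^ x * (n : ℝ) ^ x) := by
    rw [show (1 : ℝ) + 2 * x = 1 + (x + x) by ring, Real.rpow_add hn0, Real.rpow_one,
      Real.rpow_add hn0]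
  have hfacpos : (0:ℝ) < ((Nat.factorial n : ℕ) : ℝ) := by
    exact_mod_cast Nat.factorial_pos n
  have hfac1 : ((Nat.factorial (n + 1) : ℕ) : ℝ) = ((n : ℝ) + 1) * ((Nat.factorial n : ℕ) : ℝ) := by
    rw [Nat.factorial_succ]
    push_cast
    ring
  rw [hP, Real.GammaSeq, Real.GammaSeq, hA, hB, h1, h2, hfac1]
  have hn1 : (0:ℝ) < (n : ℝ) + 1 := by linarith
  field_simp

lemma tendsto_Pprod {x : ℝ} (hx : 0 < x) : Tendsto (Pprod x) atTop (nhds (Fq x)) := by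
  have hΓ : (0:ℝ) < Real.Gamma (1 + x) := Real.Gamma_pos_of_pos (by linarith)
  have hQ : Tendsto (fun n => Real.GammaSeq (1 + 2 * x) n / Real.GammaSeq (1 + x) n ^ 2)
      atTop (nhds (Fq x)) :=
    (Real.GammaSeq_tendsto_Gamma _).div ((Real.GammaSeq_tendsto_Gamma _).pow 2)
      (pow_ne_zero _ hΓ.ne')
  have hfrac : Tendsto (fun n : ℕ => (n : ℝ) / ((n : ℝ) + 1)) atTop (nhds 1) :=
    tendsto_natCast_div_add_atTop (1 : ℝ)
  have h := hQ.mul hfrac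
  rw [mul_one] at h
  rw [← tendsto_add_atTop_iff_nat 1]
  refine h.congr' ?_
  filter_upwards [eventually_ge_atTop 1] with n hn
  exact (Pprod_eq hx hn).symm

lemma Fq_le {x : ℝ} (hx : 0 < x) : Fq x ≤ Real.exp (x ^ 2 * (Real.pi ^ 2 / 6)) := by
  refine le_of_tendsto (tendsto_Pprod hx) (Eventually.of_forall fun n => ?_)
  have hsum : ∑ m ∈ Finset.range n, (x / ((m : ℝ) + 1)) ^ 2 = x ^ 2 * Tsum n := by
    rw [Tsum, Finset.mul_sum]
    refine Finset.sum_congr rfl fun m _ => ?_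
    rw [div_pow, mul_one_div]
  calc Pprod x n ≤ ∏ m ∈ Finset.range n, Real.exp ((x / ((m : ℝ) + 1)) ^ 2) :=
        Finset.prod_le_prod (fun m _ => (rterm_pos hx m).le) (fun m _ => rterm_le hx m)
    _ = Real.exp (∑ m ∈ Finset.range n, (x / ((m : ℝ) + 1)) ^ 2) := (Real.exp_sum _ _).symm
    _ ≤ Real.exp (x ^ 2 * (Real.pi ^ 2 / 6)) := by
        rw [Real.exp_le_exp, hsum]
        exact mul_le_mul_of_nonneg_left (Tsum_le n) (sq_nonneg x)

lemma le_Fq {x : ℝ} (hx : 0 < x) :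
    Real.exp ((1 - 2 * x) * x ^ 2 * (Real.pi ^ 2 / 6)) ≤ Fq x := by
  have hlhs : Tendsto (fun n => Real.exp ((1 - 2 * x) * x ^ 2 * Tsum n)) atTop
      (nhds (Real.exp ((1 - 2 * x) * x ^ 2 * (Real.pi ^ 2 / 6)))) :=
    (Real.continuous_exp.tendsto _).comp (Tsum_tendsto.const_mul ((1 - 2 * x) * x ^ 2))
  refine le_of_tendsto_of_tendsto' hlhs (tendsto_Pprod hx) fun n => ?_
  have hsum : (1 - 2 * x) * x ^ 2 * Tsum n =
      ∑ m ∈ Finset.range n, (x / ((m : ℝ) + 1)) ^ 2 * (1 - 2 * x) := by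
    rw [Tsum, Finset.mul_sum]
    refine Finset.sum_congr rfl fun m _ => ?_
    rw [div_pow, mul_one_div]
    ring
  rw [hsum, Real.exp_sum]
  refine Finset.prod_le_prod (fun m _ => (Real.exp_pos _).le) fun m _ => ?_
  refine le_trans ?_ (le_rterm hx m)
  rw [Real.exp_le_exp]
  have hm1 : (0:ℝ) < (m : ℝ) + 1 := by positivity
  have ha : x / ((m : ℝ) + 1) ≤ x := div_le_self hx.le (by linarith)
  have ha0 : 0 ≤ x / ((m : ℝ) + 1) := by positivity
  apply mul_le_mul_of_nonneg_left _ (sq_nonneg _)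
  linarith

lemma tendsto_sq_mul :
    Tendsto (fun p : ℝ => p ^ 2 * (Fq (1 / p) - 1)) atTop (nhds (Real.pi ^ 2 / 6)) := by
  have hc0 : (0:ℝ) < Real.pi ^ 2 / 6 := by positivity
  have hc4 : Real.pi ^ 2 / 6 < 4 := by nlinarith [Real.pi_lt_d2, Real.pi_pos]
  set c := Real.pi ^ 2 / 6 with hc
  -- lower and upper squeezing sequences
  have hlow : Tendsto (fun p : ℝ => c - 2 * c / p) atTop (nhds c) := by
    have h1 : Tendsto (fun p : ℝ => 2 * c / p) atTop (nhds 0) := by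
      simpa [div_eq_mul_inv] using tendsto_inv_atTop_zero.const_mul (2 * c)
    simpa using tendsto_const_nhds.sub h1
  have hup : Tendsto (fun p : ℝ => c / (1 - c / p ^ 2)) atTop (nhds c) := by
    have h1 : Tendsto (fun p : ℝ => c / p ^ 2) atTop (nhds 0) := by
      have h2 : Tendsto (fun p : ℝ => p ^ 2) atTop atTop := tendsto_pow_atTop two_ne_zero
      simpa [div_eq_mul_inv] using (tendsto_inv_atTop_zero.comp h2).const_mul c
    have h3 : Tendsto (fun p : ℝ => 1 - c / p ^ 2) atTop (nhds 1) := by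
      simpa using tendsto_const_nhds.sub h1
    have h4 := Tendsto.div (tendsto_const_nhds : Tendsto (fun _ : ℝ => c) atTop (nhds c)) h3
      (by norm_num)
    rw [div_one] at h4; exact h4
  refine tendsto_of_tendsto_of_tendsto_of_le_of_le' hlow hup ?_ ?_
  · filter_upwards [eventually_ge_atTop 2] with p hp
    have hp0 : (0:ℝ) < p := by linarith
    have hx : (0:ℝ) < 1 / p := by positivity
    have h1 := le_Fq hx
    have h2 := Real.add_one_le_exp ((1 - 2 * (1 / p)) * (1 / p) ^ 2 * c)
    have h3 : (1 - 2 * (1 / p)) * (1 / p) ^ 2 * c + 1 ≤ Fq (1 / p) := le_trans h2 h1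
    have h4 : p ^ 2 * ((1 - 2 * (1 / p)) * (1 / p) ^ 2 * c) ≤ p ^ 2 * (Fq (1 / p) - 1) :=
      mul_le_mul_of_nonneg_left (by linarith) (by positivity)
    have h5 : p ^ 2 * ((1 - 2 * (1 / p)) * (1 / p) ^ 2 * c) = c - 2 * c / p := by
      field_simp
    linarith
  · filter_upwards [eventually_ge_atTop 2] with p hp
    have hp0 : (0:ℝ) < p := by linarith
    have hx : (0:ℝ) < 1 / p := by positivity
    have hxle : (1:ℝ) / p ≤ 1 / 2 := by
      rw [div_le_div_iff₀ hp0 (by norm_num)]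
      linarith
    have hsq : (1 / p) ^ 2 * c = c / p ^ 2 := by ring
    have hu : c / p ^ 2 < 1 := by
      have h00 : (1 / p) ^ 2 ≤ (1 / 2) ^ 2 := by
        apply pow_le_pow_left₀ hx.le hxle
      nlinarith
    have h3 : Fq (1 / p) ≤ 1 / (1 - c / p ^ 2) := by
      have := (Fq_le hx).trans (exp_le_inv_one_sub (by rw [hsq]; exact hu))
      rwa [hsq] at this
    have hden : (0:ℝ) < 1 - c / p ^ 2 := by linarith
    have h7 : Fq (1 / p) * (1 - c / p ^ 2) ≤ 1 := by
      rw [← le_div_iff₀ hden]; exact h3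
    have h6 : (Fq (1 / p) - 1) * (1 - c / p ^ 2) ≤ c / p ^ 2 := by nlinarith
    rw [le_div_iff₀ hden]
    have h8 : p ^ 2 * ((Fq (1 / p) - 1) * (1 - c / p ^ 2)) ≤ p ^ 2 * (c / p ^ 2) :=
      mul_le_mul_of_nonneg_left h6 (by positivity)
    have h9 : p ^ 2 * (c / p ^ 2) = c := by field_simp
    nlinarith

lemma tendsto_Fq_one : Tendsto (fun p : ℝ => Fq (1 / p)) atTop (nhds 1) := by
  have hg : ContinuousAt Real.Gamma 1 := by
    apply (Real.differentiableAt_Gamma _).continuousAt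
    intro m h
    have hm : (0:ℝ) ≤ (m : ℝ) := Nat.cast_nonneg m
    linarith
  have hg2 : ContinuousAt Real.Gamma (1 + 2 * (0:ℝ)) := by norm_num; exact hg
  have hg1 : ContinuousAt Real.Gamma (1 + (0:ℝ)) := by norm_num; exact hg
  have hcomp1 : ContinuousAt (fun x : ℝ => Real.Gamma (1 + 2 * x)) 0 :=
    ContinuousAt.comp (f := fun x : ℝ => 1 + 2 * x) hg2 (by fun_prop)
  have hcomp2 : ContinuousAt (fun x : ℝ => Real.Gamma (1 + x)) 0 :=
    ContinuousAt.comp (f := fun x : ℝ => 1 + x) hg1 (by fun_prop)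
  have hcont : ContinuousAt Fq 0 := by
    unfold Fq
    exact hcomp1.div (hcomp2.pow 2) (by norm_num [Real.Gamma_one])
  have hinv : Tendsto (fun p : ℝ => 1 / p) atTop (nhds 0) := by
    simpa [one_div] using tendsto_inv_atTop_zero
  have h := hcont.tendsto.comp hinv
  have hFq0 : Fq 0 = 1 := by
    simp [Fq, Real.Gamma_one]
  rw [hFq0] at h
  exact h

lemma tendsto_lin_mul : Tendsto (fun p : ℝ => p * (Fq (1 / p) - 1)) atTop (nhds 0) := by
  have hinv : Tendsto (fun p : ℝ => p⁻¹) atTop (nhds 0) := tendsto_inv_atTop_zero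
  have h := tendsto_sq_mul.mul hinv
  rw [mul_zero] at h
  refine h.congr' ?_
  filter_upwards [eventually_ge_atTop 1] with p hp
  have hp0 : p ≠ 0 := by positivity
  field_simp

lemma tendsto_rpow_part :
    Tendsto (fun p : ℝ => p * ((2:ℝ) ^ (-2 / p) - 1)) atTop (nhds (-(2 * Real.log 2))) := by
  have hd : HasDerivAt (fun u : ℝ => (2:ℝ) ^ (-2 * u)) (-(2 * Real.log 2)) 0 := by
    have h1 : HasDerivAt (fun y : ℝ => (2:ℝ) ^ y) ((2:ℝ) ^ (-2 * (0:ℝ)) * Real.log 2)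
        (-2 * (0:ℝ)) := (Real.hasStrictDerivAt_const_rpow (by norm_num) _).hasDerivAt
    have h2 : HasDerivAt (fun u : ℝ => -2 * u) (-2) 0 := by
      simpa using (hasDerivAt_id (0:ℝ)).const_mul (-2)
    have h3 := h1.comp 0 h2
    convert h3 using 1
    norm_num [Real.rpow_zero]
    · rfl
    · rfl
    · rfl
    · rw [mul_zero, Real.rpow_zero]; ring
  have hslope := hasDerivAt_iff_tendsto_slope.mp hd
  have hinv : Tendsto (fun p : ℝ => 1 / p) atTop (nhds 0) := by
    simpa [one_div] using tendsto_inv_atTop_zero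
  have hinv' : Tendsto (fun p : ℝ => 1 / p) atTop (nhdsWithin 0 {(0:ℝ)}ᶜ) := by
    apply tendsto_nhdsWithin_of_tendsto_nhds_of_eventually_within _ hinv
    filter_upwards [eventually_ge_atTop 1] with p hp
    have : (0:ℝ) < 1 / p := by positivity
    exact Set.mem_compl_singleton_iff.mpr this.ne'
  have h := hslope.comp hinv'
  refine h.congr' ?_
  filter_upwards [eventually_ge_atTop 1] with p hp
  have hp0 : (0:ℝ) < p := by linarith
  have hx0 : (1:ℝ) / p ≠ 0 := by positivity
  simp only [Function.comp_apply, slope_def_field]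
  rw [show (-2:ℝ) * (1 / p) = -2 / p by ring, show (-2:ℝ) * (0:ℝ) = 0 by ring, Real.rpow_zero,
    sub_zero, one_div, div_inv_eq_mul]
  ring

lemma beta_eq {p : ℝ} (hp : 2 ≤ p) : 2 * p / betaFun (1 / p) (1 / p) = Fq (1 / p) := by
  have hp0 : (0:ℝ) < p := by linarith
  have hx0 : (1:ℝ) / p ≠ 0 := by positivity
  have h2x0 : (2:ℝ) / p ≠ 0 := by positivity
  have hΓ1 : Real.Gamma (1 / p) = p * Real.Gamma (1 / p + 1) := by
    rw [Real.Gamma_add_one hx0]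
    field_simp
  have hΓ2 : Real.Gamma (2 / p) = p / 2 * Real.Gamma (2 / p + 1) := by
    rw [Real.Gamma_add_one h2x0]
    field_simp
  have hsum : (1:ℝ) / p + 1 / p = 2 / p := by ring
  have hApos : (0:ℝ) < Real.Gamma (1 / p + 1) := Real.Gamma_pos_of_pos (by positivity)
  have hBpos : (0:ℝ) < Real.Gamma (2 / p + 1) := Real.Gamma_pos_of_pos (by positivity)
  rw [betaFun, hsum, hΓ1, hΓ2, Fq]
  rw [show (1:ℝ) + 2 * (1 / p) = 2 / p + 1 by ring, show (1:ℝ) + 1 / p = 1 / p + 1 by ring]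
  field_simp

end RootCFG

/-- As `p → ∞`, the asymptotic variance of the disjoint-blocks Root-estimator in the
serially independent case converges to that of the CFG-estimator:
`lim_{p→∞} (2p/B(1/p,1/p)) (p² + 2^{-2/p} p) - p² - p = π²/6 - 2 log 2`. -/
theorem root_variance_tendsto_cfg_variance :
    Tendsto
      (fun p : ℝ =>
        (2 * p / betaFun (1 / p) (1 / p)) * (p ^ 2 + (2 : ℝ) ^ (-2 / p) * p) - p ^ 2 - p)
      atTop (nhds (Real.pi ^ 2 / 6 - 2 * Real.log 2)) := by
  have h := (RootCFG.tendsto_sq_mul.add (RootCFG.tendsto_Fq_one.mul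
      RootCFG.tendsto_rpow_part)).add RootCFG.tendsto_lin_mul
  have hval : Real.pi ^ 2 / 6 + 1 * -(2 * Real.log 2) + 0 = Real.pi ^ 2 / 6 - 2 * Real.log 2 := by
    ring
  rw [hval] at h
  refine h.congr' ?_
  filter_upwards [eventually_ge_atTop 2] with p hp
  rw [RootCFG.beta_eq hp]
  ring
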